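/- Let q ∈ ℂ with q ≠ 0, q ≠ 1 and q ≠ −1, let α ∈ ℂ be nonzero, and consider the representation S1 of SL_q(2,ℂ) by 4×4 complex matrices: A₁₁ = diag(q²,q,1,1), A₁₂ = e₁₂ + e₂₃, A₂₁ = α·A₁₂, A₂₂ = A₁₁⁻¹ + αq⁻¹e₁₃. Then the set of matrices v ∈ M₄(ℂ) commuting with all four matrices A₁₁, A₁₂, A₂₁, A₂₂ (the algebra of invariants of the corresponding inner action) is exactly {β·1 + γ·e₄₄ + δ·e₄₃ : β, γ, δ ∈ ℂ}, a three-dimensional algebra isomorphic to the algebra of upper triangular 2×2 matrices. -/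

import Mathlib

set_option maxRecDepth 8000

/-- The 4×4 matrix unit `e_{ij}` (indices `0,…,3`). -/
def e (i j : Fin 4) : Matrix (Fin 4) (Fin 4) ℂ := Matrix.single i j 1

lemma e_mul_diagonal (d : Fin 4 → ℂ) (i j : Fin 4) :
    e i j * Matrix.diagonal d = d j • e i j := by
  ext a b
  by_cases h : b = j
  · subst h
    simp [e, Matrix.mul_diagonal, Matrix.single, mul_comm]
  · simp [e, Matrix.mul_diagonal, Matrix.single, h, Ne.symm h]

lemma diagonal_mul_e (d : Fin 4 → ℂ) (i j : Fin 4) :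
    Matrix.diagonal d * e i j = d i • e i j := by
  ext a b
  by_cases h : a = i
  · subst h
    simp [e, Matrix.diagonal_mul, Matrix.single]
  · simp [e, Matrix.diagonal_mul, Matrix.single, h, Ne.symm h]

lemma e_mul_e (i j k l : Fin 4) : e i j * e k l = if j = k then e i l else 0 := by
  split_ifs with h
  · subst h
    rw [e, e, e, Matrix.single_mul_single_same, one_mul]
  · exact Matrix.single_mul_single_of_ne 1 i j k h 1

lemma Dinv (q : ℂ) (hq0 : q ≠ 0) :
    (Matrix.diagonal ![q ^ 2, q, 1, 1])⁻¹ = Matrix.diagonal ![(q ^ 2)⁻¹, q⁻¹, 1, 1] := by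
  apply Matrix.inv_eq_right_inv
  rw [Matrix.diagonal_mul_diagonal]
  have h : (fun i => ![q ^ 2, q, 1, 1] i * ![(q ^ 2)⁻¹, q⁻¹, 1, 1] i) = fun _ => (1 : ℂ) := by
    funext i
    fin_cases i <;>
      simp [mul_inv_cancel₀ (pow_ne_zero 2 hq0), mul_inv_cancel₀ hq0]
  rw [h, Matrix.diagonal_one]

theorem invariants_of_S1 (q α : ℂ) (hq0 : q ≠ 0) (hq1 : q ≠ 1) (hq1' : q ≠ -1)
    (hα : α ≠ 0) :
    {v : Matrix (Fin 4) (Fin 4) ℂ |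
        v * Matrix.diagonal ![q ^ 2, q, 1, 1] = Matrix.diagonal ![q ^ 2, q, 1, 1] * v ∧
        v * (e 0 1 + e 1 2) = (e 0 1 + e 1 2) * v ∧
        v * (α • (e 0 1 + e 1 2)) = (α • (e 0 1 + e 1 2)) * v ∧
        v * ((Matrix.diagonal ![q ^ 2, q, 1, 1])⁻¹ + (α * q⁻¹) • e 0 2) =
          ((Matrix.diagonal ![q ^ 2, q, 1, 1])⁻¹ + (α * q⁻¹) • e 0 2) * v} =
      {v : Matrix (Fin 4) (Fin 4) ℂ |
        ∃ β γ δ : ℂ, v = β • (1 : Matrix (Fin 4) (Fin 4) ℂ) + γ • e 3 3 + δ • e 3 2} := by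
  have hqq2 : q ^ 2 ≠ q := by
    intro h
    rcases mul_eq_zero.mp (show q * (q - 1) = 0 by linear_combination h) with h' | h'
    · exact hq0 h'
    · exact hq1 (sub_eq_zero.mp h')
  have hq21 : q ^ 2 ≠ 1 := by
    intro h
    rcases mul_eq_zero.mp (show (q - 1) * (q + 1) = 0 by linear_combination h) with h' | h'
    · exact hq1 (sub_eq_zero.mp h')
    · exact hq1' (eq_neg_of_add_eq_zero_left h')
  ext v
  simp only [Set.mem_setOf_eq]
  constructor
  · rintro ⟨h1, h2', -, -⟩
    have hd : ∀ i j : Fin 4, v i j * (![q ^ 2, q, 1, 1] j) = (![q ^ 2, q, 1, 1] i) * v i j := by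
      intro i j
      have := congrFun (congrFun h1 i) j
      simpa [Matrix.mul_diagonal, Matrix.diagonal_mul] using this
    have hz : ∀ i j : Fin 4, ![q ^ 2, q, 1, 1] i ≠ ![q ^ 2, q, 1, 1] j → v i j = 0 := by
      intro i j hne
      have h0 : (![q ^ 2, q, 1, 1] j - ![q ^ 2, q, 1, 1] i) * v i j = 0 := by
        linear_combination hd i j
      rcases mul_eq_zero.mp h0 with h' | h'
      · exact absurd (sub_eq_zero.mp h').symm hne
      · exact h'
    have hn : ∀ i j : Fin 4, (v * (e 0 1 + e 1 2)) i j = ((e 0 1 + e 1 2) * v) i j := by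
      intro i j; rw [h2']
    refine ⟨v 0 0, v 3 3 - v 0 0, v 3 2, ?_⟩
    have e01 : v 0 1 = 0 := hz 0 1 (by simpa using hqq2)
    have e02 : v 0 2 = 0 := hz 0 2 (by simpa using hq21)
    have e03 : v 0 3 = 0 := hz 0 3 (by simpa using hq21)
    have e10 : v 1 0 = 0 := hz 1 0 (by simpa using Ne.symm hqq2)
    have e12 : v 1 2 = 0 := hz 1 2 (by simpa using hq1)
    have e13 : v 1 3 = 0 := hz 1 3 (by simpa using hq1)
    have e20 : v 2 0 = 0 := hz 2 0 (by simpa using Ne.symm hq21)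
    have e21 : v 2 1 = 0 := hz 2 1 (by simpa using Ne.symm hq1)
    have e30 : v 3 0 = 0 := hz 3 0 (by simpa using Ne.symm hq21)
    have e31 : v 3 1 = 0 := hz 3 1 (by simpa using Ne.symm hq1)
    have k1 : v 0 0 = v 1 1 := by
      have := hn 0 1
      simpa [e, Matrix.mul_apply, Matrix.single, Fin.sum_univ_four] using this
    have k2 : v 1 1 = v 2 2 := by
      have := hn 1 2
      simpa [e, Matrix.mul_apply, Matrix.single, Fin.sum_univ_four, e12] using this
    have k3 : v 2 3 = 0 := by
      have := (hn 1 3).symm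
      simpa [e, Matrix.mul_apply, Matrix.single, Fin.sum_univ_four, e13] using this
    ext i j
    simp only [Matrix.add_apply, Matrix.smul_apply, Matrix.one_apply, e,
      Matrix.single, Matrix.of_apply, smul_eq_mul]
    fin_cases i <;> fin_cases j <;>
      simp (config := { decide := true }) [e01, e02, e03, e10, e12, e13, e20, e21, e30, e31,
        k3, ← k1, ← k2]
  · rintro ⟨β, γ, δ, rfl⟩
    rw [Dinv q hq0]
    refine ⟨?_, ?_, ?_, ?_⟩ <;>
    · simp [smul_add, add_mul, mul_add, Matrix.smul_mul, Matrix.mul_smul,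
        e_mul_diagonal, diagonal_mul_e, e_mul_e, smul_smul]
      try module
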